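/- For any natural number n ≥ 2, the polynomial (X+1)^n - X^n is irreducible over ℚ if and only if n is prime. -/
import Mathlib
open Polynomial

lemma rev_rev {f : ℚ[X]} (h : f.coeff 0 ≠ 0) : f.reverse.reverse = f := by
  have h0 : f.natTrailingDegree = 0 := by
    rw [natTrailingDegree_eq_zero]; exact Or.inr h
  have hd : f.reverse.natDegree = f.natDegree := by
    rw [reverse_natDegree, h0, Nat.sub_zero]
  ext k
  rw [coeff_reverse, coeff_reverse, hd, revAt_invol]

lemma Pcoeff (n k : ℕ) : ((X + 1) ^ n - X ^ n : ℚ[X]).coeff k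
    = (n.choose k : ℚ) - if k = n then 1 else 0 := by
  rw [coeff_sub, coeff_X_add_one_pow, coeff_X_pow]

lemma Pdeg (n : ℕ) (hn : 2 ≤ n) :
    ((X + 1) ^ n - X ^ n : ℚ[X]).natDegree = n - 1 := by
  have hm1 : ((X : ℚ[X]) + 1).Monic := by simpa using monic_X_add_C (1:ℚ)
  have hd1 : ((X : ℚ[X]) + 1).natDegree = 1 := by simpa using natDegree_X_add_C (1:ℚ)
  have hm := hm1.pow n
  have hm2 := monic_X_pow (R := ℚ) n
  have hne : ((X + 1) ^ n - X ^ n : ℚ[X]).coeff (n-1) ≠ 0 := by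
    rw [Pcoeff]
    have h1 : ¬ n - 1 = n := by omega
    simp only [h1, if_false, sub_zero]
    exact Nat.cast_ne_zero.mpr (Nat.choose_pos (by omega)).ne'
  have hP0 : ((X + 1) ^ n - X ^ n : ℚ[X]) ≠ 0 := fun h => hne (by simp [h])
  have hlt : ((X + 1) ^ n - X ^ n : ℚ[X]).degree < ((X+1)^n : ℚ[X]).degree := by
    refine degree_sub_lt ?_ hm.ne_zero (by rw [hm.leadingCoeff, hm2.leadingCoeff])
    rw [degree_eq_natDegree hm.ne_zero, degree_eq_natDegree hm2.ne_zero]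
    norm_cast
    simp [natDegree_pow, hd1]
  have : ((X + 1) ^ n - X ^ n : ℚ[X]).natDegree < n := by
    have h3 := natDegree_lt_natDegree hP0 hlt
    simpa [natDegree_pow, hd1] using h3
  have h2 := le_natDegree_of_ne_zero hne
  omega

theorem stmt_6 (n : ℕ) (hn : 2 ≤ n) :
    Irreducible ((X + 1) ^ n - X ^ n : ℚ[X]) ↔ n.Prime := by
  set P : ℚ[X] := (X + 1) ^ n - X ^ n with hPdef
  have hPdeg : P.natDegree = n - 1 := Pdeg n hn
  have hP0 : P ≠ 0 := by intro h; rw [h, natDegree_zero] at hPdeg; omega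
  constructor
  · intro hirr
    by_contra hnp
    set p := n.minFac with hpdef
    have hp : p.Prime := Nat.minFac_prime (by omega)
    have hplt : p < n :=
      lt_of_le_of_ne (Nat.minFac_le (by omega)) (fun h => hnp (h ▸ hp))
    obtain ⟨k, hk⟩ := n.minFac_dvd
    have hdvd : ((X + 1) ^ p - X ^ p : ℚ[X]) ∣ P := by
      have : P = ((X + 1) ^ p) ^ k - (X ^ p) ^ k := by
        rw [hPdef, ← pow_mul, ← pow_mul, ← hk]
      rw [this]
      exact sub_dvd_pow_sub_pow _ _ k
    obtain ⟨E, hE⟩ := hdvd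
    have hDdeg : ((X + 1) ^ p - X ^ p : ℚ[X]).natDegree = p - 1 := Pdeg p hp.two_le
    have hD0 : ((X + 1) ^ p - X ^ p : ℚ[X]) ≠ 0 := fun h => hP0 (by rw [hE, h, zero_mul])
    have hE0 : E ≠ 0 := fun h => hP0 (by rw [hE, h, mul_zero])
    rcases hirr.isUnit_or_isUnit hE with hu | hu
    · have := natDegree_eq_zero_of_isUnit hu
      rw [hDdeg] at this
      have := hp.two_le
      omega
    · have hEdeg := natDegree_eq_zero_of_isUnit hu
      have := natDegree_mul hD0 hE0
      rw [← hE, hPdeg, hDdeg, hEdeg] at this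
      have := hp.two_le
      omega
  · intro hnp
    haveI : Fact n.Prime := ⟨hnp⟩
    set Q : ℚ[X] := (cyclotomic n ℚ).comp (X + 1) with hQdef
    have hQirr : Irreducible Q := by
      have h1 : Q = algEquivAevalXAddC (1 : ℚ) (cyclotomic n ℚ) := by
        rw [hQdef, algEquivAevalXAddC_apply, comp_eq_aeval, map_one]
      rw [h1]
      exact (MulEquiv.irreducible_iff (algEquivAevalXAddC (1 : ℚ)).toMulEquiv).mpr
        (cyclotomic.irreducible_rat (by omega))
    have hXQ : X * Q = (X + 1) ^ n - 1 := by
      rw [hQdef, cyclotomic_prime]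
      have : ((∑ i ∈ Finset.range n, (X : ℚ[X]) ^ i).comp (X + 1))
          = ∑ i ∈ Finset.range n, ((X : ℚ[X]) + 1) ^ i := by
        simp [eval₂_finset_sum]
      rw [this, mul_comm]
      have := geom_sum_mul ((X : ℚ[X]) + 1) n
      simpa using this
    have hQ0 : Q.coeff 0 ≠ 0 := by
      have h1 : (X * Q).coeff 1 = Q.coeff 0 := coeff_X_mul Q 0
      rw [hXQ] at h1
      rw [← h1, coeff_sub, coeff_X_add_one_pow, coeff_one]
      simp only [one_ne_zero, if_false, sub_zero]
      exact Nat.cast_ne_zero.mpr (by rw [Nat.choose_one_right]; omega)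
    have hRdeg : ((X + 1) ^ n - 1 : ℚ[X]).natDegree = n := by
      have hd1 : ((X : ℚ[X]) + 1).natDegree = 1 := by simpa using natDegree_X_add_C (1:ℚ)
      have : ((X + 1) ^ n - 1 : ℚ[X]) = (X + 1) ^ n - C 1 := by rw [map_one]
      rw [this, natDegree_sub_C, natDegree_pow, hd1, mul_one]
    have hQrev : Q.reverse = P := by
      rw [← reverse_X_mul, hXQ]
      ext j
      rw [coeff_reverse, hRdeg, hPdef]
      rcases le_or_gt j n with hj | hj
      · rw [revAt_le hj]
        simp only [coeff_sub, coeff_X_add_one_pow, coeff_one, coeff_X_pow]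
        rcases eq_or_lt_of_le hj with rfl | hj'
        · simp
        · have h2 : ¬ (n - j = 0) := by omega
          have h3 : ¬ (j = n) := by omega
          rw [Nat.choose_symm hj]
          simp [h2, h3]
      · rw [revAt_eq_self_of_lt hj]
        simp only [coeff_sub, coeff_X_add_one_pow, coeff_one, coeff_X_pow]
        have h2 : n.choose j = 0 := Nat.choose_eq_zero_of_lt hj
        have h3 : ¬ (j = 0) := by omega
        have h4 : ¬ (j = n) := by omega
        simp [h2, h3, h4]
    have hQdeg : Q.natDegree = n - 1 := by
      have h0 : Q.natTrailingDegree = 0 := by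
        rw [natTrailingDegree_eq_zero]; exact Or.inr hQ0
      have := reverse_natDegree Q
      rw [hQrev, hPdeg, h0, Nat.sub_zero] at this
      omega
    have hPrev : P.reverse = Q := by rw [← hQrev, rev_rev hQ0]
    constructor
    · intro hu
      have := natDegree_eq_zero_of_isUnit hu
      omega
    · intro A B hAB
      have hA0 : A ≠ 0 := fun h => hP0 (by rw [hAB, h, zero_mul])
      have hB0 : B ≠ 0 := fun h => hP0 (by rw [hAB, h, mul_zero])
      have hQAB : Q = A.reverse * B.reverse := by
        rw [← hPrev, hAB, reverse_mul_of_domain]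
      have hsum : A.natDegree + B.natDegree = n - 1 := by
        have := natDegree_mul hA0 hB0
        rw [← hAB, hPdeg] at this
        omega
      have hsum' : A.reverse.natDegree + B.reverse.natDegree = n - 1 := by
        have := natDegree_mul (p := A.reverse) (q := B.reverse)
          (by rwa [Ne, reverse_eq_zero]) (by rwa [Ne, reverse_eq_zero])
        rw [← hQAB, hQdeg] at this
        omega
      rcases hQirr.isUnit_or_isUnit hQAB with hu | hu
      · left
        have h1 := natDegree_eq_zero_of_isUnit hu
        have h2 := reverse_natDegree_le B
        have hAdeg : A.natDegree = 0 := by omega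
        have hc := eq_C_of_natDegree_eq_zero hAdeg
        rw [hc]
        exact isUnit_C.mpr (isUnit_iff_ne_zero.mpr
          (fun h => hA0 (by rw [hc, h, map_zero])))
      · right
        have h1 := natDegree_eq_zero_of_isUnit hu
        have h2 := reverse_natDegree_le A
        have hBdeg : B.natDegree = 0 := by omega
        have hc := eq_C_of_natDegree_eq_zero hBdeg
        rw [hc]
        exact isUnit_C.mpr (isUnit_iff_ne_zero.mpr
          (fun h => hB0 (by rw [hc, h, map_zero])))
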